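/- Consider the ELCA model with G clusters and K additional clusters where, for each N, Σ_{i=1}^N φ_{ig} a_k → λ^{(g,k)} > 0 and Σ_{i=1}^N φ_{ig}² a_k² → 0 as N → ∞ for all g, k. Let h_N(y) be the pmf of the hyperedge size. Then for each fixed y ∈ ℕ, h_N(y) → Σ_{g=1}^G Σ_{k=1}^K π_g τ_k e^{−λ^{(g,k)}} (λ^{(g,k)})^y / y!. -/

import Mathlib

open Filter

/-- The probability mass function of a Poisson binomial distribution. -/
noncomputable def poissonBinomialPMF (N : ℕ) (p : Fin N → ℝ) (y : ℕ) : ℝ :=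
  ∑ T ∈ Finset.powersetCard y (Finset.univ : Finset (Fin N)),
    (∏ i ∈ T, p i) * ∏ i ∈ Tᶜ, (1 - p i)

section ElcaAux
open Finset

noncomputable def esymmR (N : ℕ) (p : Fin N → ℝ) (y : ℕ) : ℝ :=
  ∑ T ∈ Finset.powersetCard y (Finset.univ : Finset (Fin N)), ∏ i ∈ T, p i

lemma esymm_rec (N : ℕ) (p : Fin N → ℝ) (y : ℕ) :
    (∑ i, p i) * esymmR N p y =
      ((y : ℝ) + 1) * esymmR N p (y + 1) +
        ∑ T ∈ Finset.powersetCard y (Finset.univ : Finset (Fin N)),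
          (∏ i ∈ T, p i) * (∑ i ∈ T, p i) := by
  have key : ∑ T ∈ Finset.powersetCard y (Finset.univ : Finset (Fin N)),
        ∑ i ∈ Tᶜ, ∏ j ∈ insert i T, p j
      = ∑ U ∈ Finset.powersetCard (y+1) (Finset.univ : Finset (Fin N)),
        ∑ i ∈ U, ∏ j ∈ U, p j := by
    rw [Finset.sum_sigma', Finset.sum_sigma']
    refine Finset.sum_nbij' (fun x => ⟨insert x.2 x.1, x.2⟩) (fun x => ⟨x.1.erase x.2, x.2⟩)
      ?_ ?_ ?_ ?_ ?_
    · rintro ⟨T, i⟩ h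
      simp only [Finset.mem_sigma, Finset.mem_powersetCard, Finset.mem_compl] at h ⊢
      obtain ⟨⟨-, hc⟩, hi⟩ := h
      exact ⟨⟨Finset.subset_univ _, by rw [Finset.card_insert_of_notMem hi, hc]⟩,
        Finset.mem_insert_self _ _⟩
    · rintro ⟨U, i⟩ h
      simp only [Finset.mem_sigma, Finset.mem_powersetCard, Finset.mem_compl] at h ⊢
      obtain ⟨⟨-, hc⟩, hi⟩ := h
      exact ⟨⟨Finset.subset_univ _, by rw [Finset.card_erase_of_mem hi, hc]; rfl⟩,
        Finset.notMem_erase _ _⟩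
    · rintro ⟨T, i⟩ h
      simp only [Finset.mem_sigma, Finset.mem_compl] at h
      simp [Finset.erase_insert h.2]
    · rintro ⟨U, i⟩ h
      simp only [Finset.mem_sigma] at h
      simp [Finset.insert_erase h.2]
    · rintro ⟨T, i⟩ h
      rfl
  have expand : ∀ T ∈ Finset.powersetCard y (Finset.univ : Finset (Fin N)),
      (∑ i, p i) * ∏ i ∈ T, p i
        = (∑ i ∈ Tᶜ, ∏ j ∈ insert i T, p j) + (∏ i ∈ T, p i) * (∑ i ∈ T, p i) := by
    intro T hT
    have hsplit : (∑ i ∈ T, p i) + ∑ i ∈ Tᶜ, p i = ∑ i, p i :=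
      Finset.sum_add_sum_compl T p
    have : ∑ i ∈ Tᶜ, ∏ j ∈ insert i T, p j = (∑ i ∈ Tᶜ, p i) * ∏ j ∈ T, p j := by
      rw [Finset.sum_mul]
      refine Finset.sum_congr rfl fun i hi => ?_
      rw [Finset.prod_insert (by simpa using hi)]
    rw [this, ← hsplit]; ring
  calc (∑ i, p i) * esymmR N p y
      = ∑ T ∈ Finset.powersetCard y (Finset.univ : Finset (Fin N)),
          (∑ i, p i) * ∏ i ∈ T, p i := by rw [esymmR, Finset.mul_sum]
    _ = ∑ T ∈ Finset.powersetCard y (Finset.univ : Finset (Fin N)),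
          ((∑ i ∈ Tᶜ, ∏ j ∈ insert i T, p j) + (∏ i ∈ T, p i) * (∑ i ∈ T, p i)) :=
        Finset.sum_congr rfl expand
    _ = (∑ T ∈ Finset.powersetCard y (Finset.univ : Finset (Fin N)),
          ∑ i ∈ Tᶜ, ∏ j ∈ insert i T, p j) + _ := Finset.sum_add_distrib
    _ = ((y : ℝ) + 1) * esymmR N p (y + 1) + _ := by
        rw [key, esymmR, Finset.mul_sum]
        congr 1
        refine Finset.sum_congr rfl fun U hU => ?_
        rw [Finset.sum_const, Finset.mem_powersetCard] at *
        rw [hU.2]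
        push_cast
        ring

lemma single_le_sqrt_sum {N : ℕ} {p : Fin N → ℝ} (hp : ∀ i, 0 ≤ p i) (i : Fin N) :
    p i ≤ Real.sqrt (∑ j, (p j) ^ 2) := by
  have h1 : (p i) ^ 2 ≤ ∑ j, (p j) ^ 2 :=
    Finset.single_le_sum (fun j _ => sq_nonneg (p j)) (Finset.mem_univ i)
  calc p i = Real.sqrt ((p i) ^ 2) := (Real.sqrt_sq (hp i)).symm
    _ ≤ _ := Real.sqrt_le_sqrt h1

lemma esymm_tendsto (p : (N : ℕ) → Fin N → ℝ) (lam : ℝ)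
    (hp : ∀ N i, 0 ≤ p N i)
    (h1 : Tendsto (fun N => ∑ i, p N i) atTop (nhds lam))
    (h2 : Tendsto (fun N => ∑ i, (p N i) ^ 2) atTop (nhds 0)) :
    ∀ y, Tendsto (fun N => esymmR N (p N) y) atTop (nhds (lam ^ y / (Nat.factorial y))) := by
  have hsqrt : Tendsto (fun N => Real.sqrt (∑ i, (p N i) ^ 2)) atTop (nhds 0) := by
    have := (Real.continuous_sqrt.tendsto 0).comp h2
    simpa [Function.comp_def] using this
  intro y
  induction y with
  | zero =>
    have : ∀ N, esymmR N (p N) 0 = 1 := by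
      intro N; simp [esymmR]
    simp only [this]
    simpa using tendsto_const_nhds
  | succ y ih =>
    set R : ℕ → ℝ := fun N => ∑ T ∈ Finset.powersetCard y (Finset.univ : Finset (Fin N)),
      (∏ i ∈ T, p N i) * (∑ i ∈ T, p N i) with hR
    have hR0 : ∀ N, 0 ≤ R N := fun N =>
      Finset.sum_nonneg fun T _ => mul_nonneg (Finset.prod_nonneg fun i _ => hp N i)
        (Finset.sum_nonneg fun i _ => hp N i)
    have hRle : ∀ N, R N ≤ (y : ℝ) * Real.sqrt (∑ i, (p N i) ^ 2) * esymmR N (p N) y := by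
      intro N
      rw [esymmR, Finset.mul_sum]
      refine Finset.sum_le_sum fun T hT => ?_
      have hcard : T.card = y := (Finset.mem_powersetCard.mp hT).2
      have hsum : ∑ i ∈ T, p N i ≤ (y : ℝ) * Real.sqrt (∑ i, (p N i) ^ 2) := by
        calc ∑ i ∈ T, p N i ≤ ∑ _i ∈ T, Real.sqrt (∑ j, (p N j) ^ 2) :=
              Finset.sum_le_sum fun i _ => single_le_sqrt_sum (hp N) i
          _ = (y : ℝ) * Real.sqrt (∑ j, (p N j) ^ 2) := by
              rw [Finset.sum_const, hcard]; simp [mul_comm]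
      calc (∏ i ∈ T, p N i) * (∑ i ∈ T, p N i)
          ≤ (∏ i ∈ T, p N i) * ((y : ℝ) * Real.sqrt (∑ i, (p N i) ^ 2)) :=
            mul_le_mul_of_nonneg_left hsum (Finset.prod_nonneg fun i _ => hp N i)
        _ = (y : ℝ) * Real.sqrt (∑ i, (p N i) ^ 2) * ∏ i ∈ T, p N i := by ring
    have hRtend : Tendsto R atTop (nhds 0) := by
      have hub : Tendsto (fun N => (y : ℝ) * Real.sqrt (∑ i, (p N i) ^ 2) * esymmR N (p N) y)
          atTop (nhds 0) := by
        have := ((hsqrt.const_mul (y : ℝ)).mul ih)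
        simpa using this
      exact tendsto_of_tendsto_of_tendsto_of_le_of_le tendsto_const_nhds hub hR0 hRle
    have heq : ∀ N, esymmR N (p N) (y + 1) =
        ((∑ i, p N i) * esymmR N (p N) y - R N) / ((y : ℝ) + 1) := by
      intro N
      have h := esymm_rec N (p N) y
      field_simp
      linarith [h]
    simp only [heq]
    have hlim : Tendsto (fun N => ((∑ i, p N i) * esymmR N (p N) y - R N) / ((y : ℝ) + 1))
        atTop (nhds ((lam * (lam ^ y / (Nat.factorial y)) - 0) / ((y : ℝ) + 1))) :=
      ((h1.mul ih).sub hRtend).div_const _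
    convert hlim using 2
    rw [Nat.factorial_succ]
    push_cast
    have hy : ((y : ℝ) + 1) ≠ 0 := by positivity
    have hf : (Nat.factorial y : ℝ) ≠ 0 := by positivity
    field_simp
    ring

lemma exp_lower {x : ℝ} (h0 : 0 ≤ x) (h2 : x ≤ 1/2) :
    Real.exp (-(x + 2 * x ^ 2)) ≤ 1 - x := by
  rw [Real.exp_neg]
  rw [inv_le_iff_one_le_mul₀ (Real.exp_pos _)]
  have h := Real.add_one_le_exp (x + 2 * x ^ 2)
  nlinarith [Real.exp_pos (x + 2 * x ^ 2)]

lemma pmf_tendsto (p : (N : ℕ) → Fin N → ℝ) (lam : ℝ)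
    (hp0 : ∀ N i, 0 ≤ p N i) (hp1 : ∀ N i, p N i ≤ 1)
    (h1 : Tendsto (fun N => ∑ i, p N i) atTop (nhds lam))
    (h2 : Tendsto (fun N => ∑ i, (p N i) ^ 2) atTop (nhds 0)) (y : ℕ) :
    Tendsto (fun N => poissonBinomialPMF N (p N) y) atTop
      (nhds (Real.exp (-lam) * lam ^ y / (Nat.factorial y))) := by
  have hE := esymm_tendsto p lam hp0 h1 h2 y
  have hsqrt : Tendsto (fun N => Real.sqrt (∑ i, (p N i) ^ 2)) atTop (nhds 0) := by
    have := (Real.continuous_sqrt.tendsto 0).comp h2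
    simpa [Function.comp_def] using this
  set S1 : ℕ → ℝ := fun N => ∑ i, p N i with hS1def
  set S2 : ℕ → ℝ := fun N => ∑ i, (p N i) ^ 2 with hS2def
  set L : ℕ → ℝ := fun N => Real.exp (-(S1 N) - 2 * S2 N) * esymmR N (p N) y with hLdef
  set U : ℕ → ℝ := fun N => Real.exp (-(S1 N) + (y : ℝ) * Real.sqrt (S2 N)) * esymmR N (p N) y
    with hUdef
  have hLlim : Tendsto L atTop (nhds (Real.exp (-lam) * lam ^ y / (Nat.factorial y))) := by
    have hexp : Tendsto (fun N => Real.exp (-(S1 N) - 2 * S2 N)) atTop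
        (nhds (Real.exp (-lam))) := by
      have : Tendsto (fun N => -(S1 N) - 2 * S2 N) atTop (nhds (-lam - 2 * 0)) :=
        (h1.neg).sub (h2.const_mul 2)
      simpa [Function.comp_def] using (Real.continuous_exp.tendsto _).comp this
    have := hexp.mul hE
    simpa [mul_div_assoc] using this
  have hUlim : Tendsto U atTop (nhds (Real.exp (-lam) * lam ^ y / (Nat.factorial y))) := by
    have hexp : Tendsto (fun N => Real.exp (-(S1 N) + (y : ℝ) * Real.sqrt (S2 N))) atTop
        (nhds (Real.exp (-lam))) := by
      have : Tendsto (fun N => -(S1 N) + (y : ℝ) * Real.sqrt (S2 N)) atTop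
          (nhds (-lam + (y : ℝ) * 0)) := (h1.neg).add (hsqrt.const_mul _)
      simpa [Function.comp_def] using (Real.continuous_exp.tendsto _).comp this
    have := hexp.mul hE
    simpa [mul_div_assoc] using this
  have hsmall : ∀ᶠ N in atTop, S2 N < 1/4 :=
    h2.eventually (gt_mem_nhds (by norm_num : (0:ℝ) < 1/4))
  have hLle : ∀ᶠ N in atTop, L N ≤ poissonBinomialPMF N (p N) y := by
    filter_upwards [hsmall] with N hN
    have hhalf : ∀ i, p N i ≤ 1/2 := by
      intro i
      have := single_le_sqrt_sum (hp0 N) i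
      have h4 : Real.sqrt (S2 N) ≤ 1/2 := by
        rw [show (1/2 : ℝ) = Real.sqrt (1/4) by
          rw [show (1/4 : ℝ) = (1/2)^2 by norm_num, Real.sqrt_sq]; norm_num]
        exact Real.sqrt_le_sqrt hN.le
      linarith
    have hprod : Real.exp (-(S1 N) - 2 * S2 N) ≤ ∏ i, (1 - p N i) := by
      have hsum : (-(S1 N) - 2 * S2 N) = ∑ i, (-(p N i + 2 * (p N i) ^ 2)) := by
        simp only [hS1def, hS2def]
        rw [Finset.sum_neg_distrib, Finset.sum_add_distrib, ← Finset.mul_sum]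
        ring
      rw [hsum, Real.exp_sum]
      exact Finset.prod_le_prod (fun i _ => (Real.exp_pos _).le)
        (fun i _ => exp_lower (hp0 N i) (hhalf i))
    rw [hLdef]
    simp only [poissonBinomialPMF, esymmR, Finset.mul_sum]
    refine Finset.sum_le_sum fun T hT => ?_
    have hc : ∏ i, (1 - p N i) ≤ ∏ i ∈ Tᶜ, (1 - p N i) := by
      rw [← Finset.prod_mul_prod_compl T (fun i => 1 - p N i)]
      have hTc0 : 0 ≤ ∏ i ∈ Tᶜ, (1 - p N i) :=
        Finset.prod_nonneg fun i _ => by linarith [hp1 N i]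
      have hT1 : ∏ i ∈ T, (1 - p N i) ≤ 1 :=
        Finset.prod_le_one (fun i _ => by linarith [hp1 N i]) (fun i _ => by linarith [hp0 N i])
      nlinarith
    calc Real.exp (-(S1 N) - 2 * S2 N) * ∏ i ∈ T, p N i
        ≤ (∏ i, (1 - p N i)) * ∏ i ∈ T, p N i :=
          mul_le_mul_of_nonneg_right hprod (Finset.prod_nonneg fun i _ => hp0 N i)
      _ ≤ (∏ i ∈ Tᶜ, (1 - p N i)) * ∏ i ∈ T, p N i :=
          mul_le_mul_of_nonneg_right hc (Finset.prod_nonneg fun i _ => hp0 N i)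
      _ = (∏ i ∈ T, p N i) * ∏ i ∈ Tᶜ, (1 - p N i) := by ring
  have hUle : ∀ᶠ N in atTop, poissonBinomialPMF N (p N) y ≤ U N := by
    filter_upwards with N
    rw [hUdef]
    simp only [poissonBinomialPMF, esymmR, Finset.mul_sum]
    refine Finset.sum_le_sum fun T hT => ?_
    have hcard : T.card = y := (Finset.mem_powersetCard.mp hT).2
    have hTc : ∏ i ∈ Tᶜ, (1 - p N i) ≤ Real.exp (-(S1 N) + (y : ℝ) * Real.sqrt (S2 N)) := by
      have step1 : ∏ i ∈ Tᶜ, (1 - p N i) ≤ ∏ i ∈ Tᶜ, Real.exp (-(p N i)) :=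
        Finset.prod_le_prod (fun i _ => by linarith [hp1 N i])
          (fun i _ => by linarith [Real.add_one_le_exp (-(p N i))])
      have step2 : ∏ i ∈ Tᶜ, Real.exp (-(p N i)) = Real.exp (-(∑ i ∈ Tᶜ, p N i)) := by
        rw [← Real.exp_sum, Finset.sum_neg_distrib]
      have step3 : -(∑ i ∈ Tᶜ, p N i) ≤ -(S1 N) + (y : ℝ) * Real.sqrt (S2 N) := by
        have hsplit : (∑ i ∈ T, p N i) + ∑ i ∈ Tᶜ, p N i = S1 N :=
          Finset.sum_add_sum_compl T (p N)
        have hTsum : ∑ i ∈ T, p N i ≤ (y : ℝ) * Real.sqrt (S2 N) := by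
          calc ∑ i ∈ T, p N i ≤ ∑ _i ∈ T, Real.sqrt (S2 N) :=
                Finset.sum_le_sum fun i _ => single_le_sqrt_sum (hp0 N) i
            _ = (y : ℝ) * Real.sqrt (S2 N) := by
                rw [Finset.sum_const, hcard]; simp [mul_comm]
        linarith
      calc ∏ i ∈ Tᶜ, (1 - p N i) ≤ Real.exp (-(∑ i ∈ Tᶜ, p N i)) := step2 ▸ step1
        _ ≤ _ := Real.exp_le_exp.mpr step3
    calc (∏ i ∈ T, p N i) * ∏ i ∈ Tᶜ, (1 - p N i)
        ≤ (∏ i ∈ T, p N i) * Real.exp (-(S1 N) + (y : ℝ) * Real.sqrt (S2 N)) :=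
          mul_le_mul_of_nonneg_left hTc (Finset.prod_nonneg fun i _ => hp0 N i)
      _ = Real.exp (-(S1 N) + (y : ℝ) * Real.sqrt (S2 N)) * ∏ i ∈ T, p N i := by ring
  exact tendsto_of_tendsto_of_tendsto_of_le_of_le' hLlim hUlim hLle hUle

end ElcaAux

/-- Proposition 2(2): the hyperedge size pmf of the ELCA model converges to a
(G × K)-component Poisson mixture. -/
theorem elca_size_poisson_mixture_limit {G K : ℕ}
    (π : Fin G → ℝ) (τ : Fin K → ℝ) (a : Fin K → ℝ)
    (φ : (N : ℕ) → Fin N → Fin G → ℝ) (lam : Fin G → Fin K → ℝ)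
    (hπ0 : ∀ g, 0 ≤ π g) (hπ1 : ∑ g, π g = 1)
    (hτ0 : ∀ k, 0 ≤ τ k) (hτ1 : ∑ k, τ k = 1)
    (hincl : ∀ N i g k, a k * φ N i g ∈ Set.Icc (0 : ℝ) 1)
    (hlam : ∀ g k, 0 < lam g k)
    (hmean : ∀ g k, Tendsto (fun N => ∑ i, φ N i g * a k) atTop (nhds (lam g k)))
    (hsq : ∀ g k, Tendsto (fun N => ∑ i, (φ N i g) ^ 2 * (a k) ^ 2) atTop (nhds 0)) :
    ∀ y : ℕ,
      Tendsto
        (fun N => ∑ g, ∑ k, π g * τ k * poissonBinomialPMF N (fun i => a k * φ N i g) y)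
        atTop
        (nhds (∑ g, ∑ k,
          π g * τ k * (Real.exp (-lam g k) * (lam g k) ^ y / (Nat.factorial y)))) := by
  intro y
  refine tendsto_finset_sum _ fun g _ => ?_
  refine tendsto_finset_sum _ fun k _ => ?_
  refine Tendsto.const_mul _ ?_
  refine pmf_tendsto (fun N i => a k * φ N i g) (lam g k)
    (fun N i => (hincl N i g k).1) (fun N i => (hincl N i g k).2) ?_ ?_ y
  · have := hmean g k
    refine this.congr fun N => ?_
    exact Finset.sum_congr rfl fun i _ => mul_comm _ _
  · have := hsq g k
    refine this.congr fun N => ?_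
    refine Finset.sum_congr rfl fun i _ => ?_
    rw [mul_pow]
    ring
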